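/- p-equivalence of quandle matrices does not preserve the determinant: the integer matrices A = [[1,4,5,2,3],[3,2,1,5,4],[4,5,3,1,2],[5,3,2,4,1],[2,1,4,3,5]] and B = [[1,5,4,3,2],[3,2,1,5,4],[5,4,3,2,1],[2,1,5,4,3],[4,3,2,1,5]] satisfy det A = −825 and det B = −1875, yet B is obtained from A by p-equivalence via the permutation ρ = (1 5 3)(2 4): B i j = ρ(A (ρ⁻¹ i) (ρ⁻¹ j)) for all i, j (with entries regarded as elements of {1,…,5}). -/

import Mathlib

set_option maxHeartbeats 1000000 in
/-- p-equivalence of quandle matrices does not preserve the determinant: the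
matrices `A` and `B` below (with entries in `{1, …, 5}`, here encoded as `Fin 5`
with `i` standing for the integer `i + 1`) are p-equivalent via the permutation
`ρ = (1 5 3)(2 4)` (in 0-indexed form, `0 ↦ 2, 1 ↦ 3, 2 ↦ 4, 3 ↦ 1, 4 ↦ 0`), yet
their integer determinants are `-825` and `-1875` respectively. -/
theorem stmt12 (A B : Matrix (Fin 5) (Fin 5) (Fin 5)) (ρ : Equiv.Perm (Fin 5))
    (hA : A = !![0,3,4,1,2; 2,1,0,4,3; 3,4,2,0,1; 4,2,1,3,0; 1,0,3,2,4])
    (hB : B = !![0,4,3,2,1; 2,1,0,4,3; 4,3,2,1,0; 1,0,4,3,2; 3,2,1,0,4])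
    (hρ : ∀ i, ρ i = ![2, 3, 4, 1, 0] i) :
    (A.map fun x => ((x : ℕ) : ℤ) + 1).det = -825 ∧
    (B.map fun x => ((x : ℕ) : ℤ) + 1).det = -1875 ∧
    (∀ i j, B i j = ρ (A (ρ⁻¹ i) (ρ⁻¹ j))) := by
  have hinv : ∀ i, ρ⁻¹ i = ![4, 3, 0, 1, 2] i := by
    intro i
    rw [Equiv.Perm.inv_def, Equiv.symm_apply_eq]
    fin_cases i <;> simp [hρ]
  subst hA hB
  refine ⟨?_, ?_, ?_⟩
  · have : (!![0,3,4,1,2; 2,1,0,4,3; 3,4,2,0,1; 4,2,1,3,0; 1,0,3,2,4].map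
        fun x : Fin 5 => ((x : ℕ) : ℤ) + 1) =
        !![1,4,5,2,3; 3,2,1,5,4; 4,5,3,1,2; 5,3,2,4,1; 2,1,4,3,5] := by
      ext i j; fin_cases i <;> fin_cases j <;> rfl
    rw [this]
    simp [Matrix.det_succ_row_zero, Fin.sum_univ_succ, Fin.succAbove]
  · have : (!![0,4,3,2,1; 2,1,0,4,3; 4,3,2,1,0; 1,0,4,3,2; 3,2,1,0,4].map
        fun x : Fin 5 => ((x : ℕ) : ℤ) + 1) =
        !![1,5,4,3,2; 3,2,1,5,4; 5,4,3,2,1; 2,1,5,4,3; 4,3,2,1,5] := by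
      ext i j; fin_cases i <;> fin_cases j <;> rfl
    rw [this]
    simp [Matrix.det_succ_row_zero, Fin.sum_univ_succ, Fin.succAbove]
  · intro i j
    fin_cases i <;> fin_cases j <;> simp [hρ, hinv]
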